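/- Let T' be a rooted binary tree over leaf set G realizing a consistent dense set of rooted triplets, and a a new leaf such that the dense triplet set on G ∪ {a} is consistent. Then there exists a unique edge e of T' such that subdividing e and attaching a at the new node yields the tree realizing the triplet set on G ∪ {a}. -/

import Mathlib

/-- Rooted binary trees with leaves labelled by `V`. -/
inductive RTree (V : Type*) : Type _ where
  | leaf : V → RTree V
  | node : RTree V → RTree V → RTree V

namespace RTree

variable {V : Type*} [DecidableEq V]

/-- The list of leaf labels of a tree, from left to right. -/
def leafList : RTree V → List V
  | .leaf x => [x]
  | .node l r => l.leafList ++ r.leafList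

/-- The set of leaf labels of a tree. -/
def leaves (t : RTree V) : Finset V := t.leafList.toFinset

/-- A tree is proper when all its leaf labels are distinct. -/
def Proper (t : RTree V) : Prop := t.leafList.Nodup

/-- `Consistent T a b c` means that the rooted triplet `ab|c` is consistent
with `T`, i.e. the restriction of `T` to `{a, b, c}` is homeomorphic to the
rooted binary tree in which `a` and `b` are siblings below one child of the
root, the other child being `c`. -/
def Consistent : RTree V → V → V → V → Prop
  | .leaf _, _, _, _ => False
  | .node l r, a, b, c =>
      (a ∈ l.leaves ∧ b ∈ l.leaves ∧ c ∈ l.leaves ∧ Consistent l a b c) ∨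
      (a ∈ r.leaves ∧ b ∈ r.leaves ∧ c ∈ r.leaves ∧ Consistent r a b c) ∨
      (a ∈ l.leaves ∧ b ∈ l.leaves ∧ c ∈ r.leaves) ∨
      (a ∈ r.leaves ∧ b ∈ r.leaves ∧ c ∈ l.leaves)

end RTree

variable {V : Type*} [DecidableEq V]

/-- A dense rooted-triplet instance is encoded by a map `R` assigning to each
`3`-subset `{a, b, c}` its chosen apex: `R {a, b, c} = c` means that the
triplet `ab|c` belongs to the instance. Validity requires the apex to belong
to the `3`-set. -/
def TripletValid (R : Finset V → V) (S : Finset V) : Prop :=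
  ∀ a b c : V, a ∈ S → b ∈ S → c ∈ S → a ≠ b → a ≠ c → b ≠ c →
    R {a, b, c} ∈ ({a, b, c} : Finset V)

/-- `Realizes T R S`: every rooted triplet of the instance `R` on leaves of
`S` is consistent with the tree `T`. -/
def Realizes (T : RTree V) (R : Finset V → V) (S : Finset V) : Prop :=
  ∀ a b c : V, a ∈ S → b ∈ S → c ∈ S → a ≠ b → a ≠ c → b ≠ c →
    R {a, b, c} = c → T.Consistent a b c

/-- The instance `R` restricted to `S` is consistent: some rooted binary tree
over `S` realizes all its triplets. -/
def TripletConsistentOn (R : Finset V → V) (S : Finset V) : Prop :=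
  ∃ T : RTree V, T.Proper ∧ T.leaves = S ∧ Realizes T R S

/-- `Insertion a T T''` holds when `T''` is obtained from `T` by choosing an
edge of `T` (or the edge above the root), subdividing it, and attaching the
new leaf `a` at the created node. -/
inductive Insertion (a : V) : RTree V → RTree V → Prop where
  | here (t : RTree V) : Insertion a t (.node (.leaf a) t)
  | left {l l' : RTree V} (r : RTree V) :
      Insertion a l l' → Insertion a (.node l r) (.node l' r)
  | right (l : RTree V) {r r' : RTree V} :
      Insertion a r r' → Insertion a (.node l r) (.node l r')

set_option linter.unusedSectionVars false
set_option linter.unusedVariables false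

section Aux

namespace RTree

variable {V : Type*} [DecidableEq V]

theorem leafList_ne_nil (t : RTree V) : t.leafList ≠ [] := by
  induction t with
  | leaf x => simp [leafList]
  | node l r ihl ihr =>
    simp only [leafList, ne_eq, List.append_eq_nil_iff]
    rintro ⟨h, -⟩; exact ihl h

theorem mem_leaves {t : RTree V} {x : V} : x ∈ t.leaves ↔ x ∈ t.leafList :=
  List.mem_toFinset

theorem exists_mem_leaves (t : RTree V) : ∃ x, x ∈ t.leaves := by
  obtain ⟨x, hx⟩ := List.exists_mem_of_ne_nil _ (leafList_ne_nil t)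
  exact ⟨x, mem_leaves.2 hx⟩

theorem proper_left {l r : RTree V} (h : (node l r).Proper) : l.Proper :=
  (List.nodup_append.1 h).1

theorem proper_right {l r : RTree V} (h : (node l r).Proper) : r.Proper :=
  (List.nodup_append.1 h).2.1

theorem proper_disj {l r : RTree V} (h : (node l r).Proper) {x : V}
    (hx : x ∈ l.leaves) : x ∉ r.leaves := by
  intro hx'
  exact (List.nodup_append.1 h).2.2 _ (mem_leaves.1 hx) _ (mem_leaves.1 hx') rfl

theorem mem_leaves_node {l r : RTree V} {x : V} :
    x ∈ (node l r).leaves ↔ x ∈ l.leaves ∨ x ∈ r.leaves := by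
  simp [leaves, leafList]

theorem leaves_singleton {t : RTree V} {x : V} (hP : t.Proper)
    (h : t.leaves = {x}) : t = leaf x := by
  cases t with
  | leaf y =>
    have : y ∈ ({x} : Finset V) := h ▸ (by simp [leaves, leafList])
    simp at this; rw [this]
  | node l r =>
    obtain ⟨u, hu⟩ := exists_mem_leaves l
    obtain ⟨v, hv⟩ := exists_mem_leaves r
    have hu' : u ∈ ({x} : Finset V) := h ▸ mem_leaves_node.2 (Or.inl hu)
    have hv' : v ∈ ({x} : Finset V) := h ▸ mem_leaves_node.2 (Or.inr hv)
    simp only [Finset.mem_singleton] at hu' hv'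
    subst hu'; subst hv'
    exact absurd hv (proper_disj hP hu)

theorem consistent_mem {t : RTree V} {a b c : V} (h : t.Consistent a b c) :
    a ∈ t.leaves ∧ b ∈ t.leaves ∧ c ∈ t.leaves := by
  induction t with
  | leaf x => exact absurd h (by simp [Consistent])
  | node l r ihl ihr =>
    rcases h with ⟨h1, h2, h3, h4⟩ | ⟨h1, h2, h3, h4⟩ | ⟨h1, h2, h3⟩ | ⟨h1, h2, h3⟩ <;>
      exact ⟨mem_leaves_node.2 (by tauto), mem_leaves_node.2 (by tauto),
        mem_leaves_node.2 (by tauto)⟩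

/-- In a proper node, a consistent triplet whose three labels all lie in the left
subtree is consistent with the left subtree. -/
theorem consistent_of_left {l r : RTree V} (hP : (node l r).Proper) {a b c : V}
    (hb : a ∈ l.leaves) (hb' : b ∈ l.leaves) (hc : c ∈ l.leaves)
    (h : Consistent (node l r) a b c) : Consistent l a b c := by
  rcases h with ⟨_, _, _, h4⟩ | ⟨h1, _, _, _⟩ | ⟨_, _, h3⟩ | ⟨h1, _, _⟩
  · exact h4
  · exact absurd h1 (proper_disj hP hb)
  · exact absurd h3 (proper_disj hP hc)
  · exact absurd h1 (proper_disj hP hb)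

theorem consistent_of_right {l r : RTree V} (hP : (node l r).Proper) {a b c : V}
    (hb : a ∈ r.leaves) (hb' : b ∈ r.leaves) (hc : c ∈ r.leaves)
    (h : Consistent (node l r) a b c) : Consistent r a b c := by
  rcases h with ⟨h1, _, _, _⟩ | ⟨_, _, _, h4⟩ | ⟨h1, _, _⟩ | ⟨_, _, h3⟩
  · exact absurd hb (proper_disj hP h1)
  · exact h4
  · exact absurd hb (proper_disj hP h1)
  · exact absurd hc (proper_disj hP h3)

end RTree

end Aux

section Aux2

namespace RTree

variable {V : Type*} [DecidableEq V]

theorem leaves_leaf (x : V) : (leaf x : RTree V).leaves = {x} := by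
  simp [leaves, leafList]

theorem tripletValid_mono {R : Finset V → V} {S S' : Finset V} (h : TripletValid R S')
    (hs : S ⊆ S') : TripletValid R S :=
  fun a b c ha hb hc => h a b c (hs ha) (hs hb) (hs hc)

theorem consistent_swap {l r : RTree V} {a b c : V}
    (h : Consistent (node l r) a b c) : Consistent (node r l) a b c := by
  rcases h with h | h | h | h
  · exact Or.inr (Or.inl h)
  · exact Or.inl h
  · exact Or.inr (Or.inr (Or.inr h))
  · exact Or.inr (Or.inr (Or.inl h))

theorem proper_swap {l r : RTree V} (h : (node l r).Proper) : (node r l).Proper :=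
  (List.perm_append_comm (l₁ := l.leafList) (l₂ := r.leafList)).nodup h

theorem realizes_swap {R : Finset V → V} {l r : RTree V} {S : Finset V}
    (h : Realizes (node l r) R S) : Realizes (node r l) R S :=
  fun a b c h1 h2 h3 h4 h5 h6 h7 => consistent_swap (h a b c h1 h2 h3 h4 h5 h6 h7)

theorem leaves_node_swap (l r : RTree V) : (node r l).leaves = (node l r).leaves := by
  ext w; simp only [mem_leaves_node]; tauto

theorem realizes_left {R : Finset V → V} {l r : RTree V} (hP : (node l r).Proper)
    {S : Finset V} (h : Realizes (node l r) R S) (hsub : l.leaves ⊆ S) :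
    Realizes l R l.leaves := by
  intro b c d hb hc hd h1 h2 h3 h4
  exact consistent_of_left hP hb hc hd (h b c d (hsub hb) (hsub hc) (hsub hd) h1 h2 h3 h4)

theorem realizes_right {R : Finset V → V} {l r : RTree V} (hP : (node l r).Proper)
    {S : Finset V} (h : Realizes (node l r) R S) (hsub : r.leaves ⊆ S) :
    Realizes r R r.leaves := by
  intro b c d hb hc hd h1 h2 h3 h4
  exact consistent_of_right hP hb hc hd (h b c d (hsub hb) (hsub hc) (hsub hd) h1 h2 h3 h4)

theorem cross_apex {R : Finset V → V} {l r : RTree V} (hP : (node l r).Proper)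
    {S : Finset V} (hreal : Realizes (node l r) R S) {x y z : V}
    (hx : x ∈ l.leaves) (hy : y ∈ r.leaves)
    (hxS : x ∈ S) (hyS : y ∈ S) (hzS : z ∈ S) (hzx : z ≠ x) (hzy : z ≠ y) :
    R {x, y, z} ≠ z := by
  intro h
  have hxy : x ≠ y := fun e => proper_disj hP hx (e ▸ hy)
  have hc := hreal x y z hxS hyS hzS hxy (Ne.symm hzx) (Ne.symm hzy) h
  rcases hc with ⟨_, h2, _, _⟩ | ⟨h1, _, _, _⟩ | ⟨_, h2, _⟩ | ⟨h1, _, _⟩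
  · exact absurd hy (proper_disj hP h2)
  · exact absurd h1 (proper_disj hP hx)
  · exact absurd hy (proper_disj hP h2)
  · exact absurd h1 (proper_disj hP hx)

theorem same_side_apex {R : Finset V → V} {l r : RTree V} (hP : (node l r).Proper)
    {S : Finset V} (hval : TripletValid R S) (hreal : Realizes (node l r) R S) {x y z : V}
    (hx : x ∈ l.leaves) (hy : y ∈ l.leaves) (hz : z ∈ r.leaves)
    (hxS : x ∈ S) (hyS : y ∈ S) (hzS : z ∈ S) (hxy : x ≠ y) :
    R {x, y, z} = z := by
  have hxz : x ≠ z := fun e => proper_disj hP hx (e ▸ hz)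
  have hyz : y ≠ z := fun e => proper_disj hP hy (e ▸ hz)
  have hv := hval x y z hxS hyS hzS hxy hxz hyz
  simp only [Finset.mem_insert, Finset.mem_singleton] at hv
  rcases hv with h | h | h
  · exfalso
    have hset : ({y, z, x} : Finset V) = {x, y, z} := by ext w; simp; tauto
    have hc := hreal y z x hyS hzS hxS hyz (Ne.symm hxy) (Ne.symm hxz) (by rw [hset]; exact h)
    rcases hc with ⟨_, h2, _, _⟩ | ⟨h1, _, _, _⟩ | ⟨_, h2, _⟩ | ⟨h1, _, _⟩
    · exact absurd hz (proper_disj hP h2)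
    · exact absurd h1 (proper_disj hP hy)
    · exact absurd hz (proper_disj hP h2)
    · exact absurd h1 (proper_disj hP hy)
  · exfalso
    have hset : ({x, z, y} : Finset V) = {x, y, z} := by ext w; simp; tauto
    have hc := hreal x z y hxS hzS hyS hxz hxy (Ne.symm hyz) (by rw [hset]; exact h)
    rcases hc with ⟨_, h2, _, _⟩ | ⟨h1, _, _, _⟩ | ⟨_, h2, _⟩ | ⟨h1, _, _⟩
    · exact absurd hz (proper_disj hP h2)
    · exact absurd h1 (proper_disj hP hx)
    · exact absurd hz (proper_disj hP h2)
    · exact absurd h1 (proper_disj hP hx)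
  · exact h

/-- Flip-equivalence of rooted trees. -/
inductive REquiv : RTree V → RTree V → Prop where
  | leaf (x : V) : REquiv (.leaf x) (.leaf x)
  | node {l l' r r' : RTree V} :
      REquiv l l' → REquiv r r' → REquiv (.node l r) (.node l' r')
  | swap {l l' r r' : RTree V} :
      REquiv l l' → REquiv r r' → REquiv (.node l r) (.node r' l')

theorem REquiv.refl : ∀ t : RTree V, REquiv t t
  | .leaf x => .leaf x
  | .node l r => .node (REquiv.refl l) (REquiv.refl r)

theorem REquiv.perm {s t : RTree V} (h : REquiv s t) : s.leafList.Perm t.leafList := by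
  induction h with
  | leaf x => exact List.Perm.refl _
  | node h1 h2 ih1 ih2 => exact ih1.append ih2
  | swap h1 h2 ih1 ih2 => exact (ih1.append ih2).trans List.perm_append_comm

theorem REquiv.leaves_eq {s t : RTree V} (h : REquiv s t) : s.leaves = t.leaves :=
  List.toFinset_eq_of_perm _ _ h.perm

theorem REquiv.consistent {s t : RTree V} (h : REquiv s t) {a b c : V}
    (hc : Consistent s a b c) : Consistent t a b c := by
  induction h with
  | leaf x => exact hc
  | node h1 h2 ih1 ih2 =>
    rcases hc with ⟨m1, m2, m3, m4⟩ | ⟨m1, m2, m3, m4⟩ | ⟨m1, m2, m3⟩ | ⟨m1, m2, m3⟩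
    · exact Or.inl ⟨h1.leaves_eq ▸ m1, h1.leaves_eq ▸ m2, h1.leaves_eq ▸ m3, ih1 m4⟩
    · exact Or.inr (Or.inl ⟨h2.leaves_eq ▸ m1, h2.leaves_eq ▸ m2, h2.leaves_eq ▸ m3, ih2 m4⟩)
    · exact Or.inr (Or.inr (Or.inl ⟨h1.leaves_eq ▸ m1, h1.leaves_eq ▸ m2, h2.leaves_eq ▸ m3⟩))
    · exact Or.inr (Or.inr (Or.inr ⟨h2.leaves_eq ▸ m1, h2.leaves_eq ▸ m2, h1.leaves_eq ▸ m3⟩))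
  | swap h1 h2 ih1 ih2 =>
    rcases hc with ⟨m1, m2, m3, m4⟩ | ⟨m1, m2, m3, m4⟩ | ⟨m1, m2, m3⟩ | ⟨m1, m2, m3⟩
    · exact Or.inr (Or.inl ⟨h1.leaves_eq ▸ m1, h1.leaves_eq ▸ m2, h1.leaves_eq ▸ m3, ih1 m4⟩)
    · exact Or.inl ⟨h2.leaves_eq ▸ m1, h2.leaves_eq ▸ m2, h2.leaves_eq ▸ m3, ih2 m4⟩
    · exact Or.inr (Or.inr (Or.inr ⟨h1.leaves_eq ▸ m1, h1.leaves_eq ▸ m2, h2.leaves_eq ▸ m3⟩))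
    · exact Or.inr (Or.inr (Or.inl ⟨h2.leaves_eq ▸ m1, h2.leaves_eq ▸ m2, h1.leaves_eq ▸ m3⟩))

theorem insertion_perm {a : V} {t t' : RTree V} (h : Insertion a t t') :
    t'.leafList.Perm (a :: t.leafList) := by
  induction h with
  | here t => exact List.Perm.refl _
  | left r h ih =>
    exact (ih.append_right r.leafList).trans (List.Perm.refl _)
  | right l h ih =>
    exact (ih.append_left l.leafList).trans List.perm_middle

theorem insertion_leaves {a : V} {t t' : RTree V} (h : Insertion a t t') :
    t'.leaves = insert a t.leaves := by
  have := List.toFinset_eq_of_perm _ _ (insertion_perm h)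
  simpa [leaves] using this

theorem insertion_proper {a : V} {t t' : RTree V} (h : Insertion a t t')
    (hP : t.Proper) (ha : a ∉ t.leaves) : t'.Proper := by
  have : (a :: t.leafList).Nodup := List.nodup_cons.2 ⟨fun m => ha (mem_leaves.2 m), hP⟩
  exact ((insertion_perm h).nodup_iff).2 this

theorem insertion_leaves_subset {a : V} {t t' : RTree V} (h : Insertion a t t') :
    t.leaves ⊆ t'.leaves := by
  rw [insertion_leaves h]; exact Finset.subset_insert a _

theorem insertion_consistent {a : V} {t t' : RTree V} (h : Insertion a t t') {b c d : V}
    (hc : Consistent t b c d) : Consistent t' b c d := by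
  induction h generalizing b c d with
  | here t =>
    obtain ⟨m1, m2, m3⟩ := consistent_mem hc
    exact Or.inr (Or.inl ⟨m1, m2, m3, hc⟩)
  | left r h ih =>
    have hmm := insertion_leaves_subset h
    rcases hc with ⟨m1, m2, m3, m4⟩ | ⟨m1, m2, m3, m4⟩ | ⟨m1, m2, m3⟩ | ⟨m1, m2, m3⟩
    · exact Or.inl ⟨hmm m1, hmm m2, hmm m3, ih m4⟩
    · exact Or.inr (Or.inl ⟨m1, m2, m3, m4⟩)
    · exact Or.inr (Or.inr (Or.inl ⟨hmm m1, hmm m2, m3⟩))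
    · exact Or.inr (Or.inr (Or.inr ⟨m1, m2, hmm m3⟩))
  | right l h ih =>
    have hmm := insertion_leaves_subset h
    rcases hc with ⟨m1, m2, m3, m4⟩ | ⟨m1, m2, m3, m4⟩ | ⟨m1, m2, m3⟩ | ⟨m1, m2, m3⟩
    · exact Or.inl ⟨m1, m2, m3, m4⟩
    · exact Or.inr (Or.inl ⟨hmm m1, hmm m2, hmm m3, ih m4⟩)
    · exact Or.inr (Or.inr (Or.inl ⟨m1, m2, hmm m3⟩))
    · exact Or.inr (Or.inr (Or.inr ⟨hmm m1, hmm m2, m3⟩))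

theorem insertion_equiv {a : V} :
    ∀ {t0 t1 : RTree V}, Insertion a t0 t1 → ∀ {t' : RTree V}, REquiv t0 t' →
      ∃ t2 : RTree V, Insertion a t' t2 ∧ REquiv t1 t2 := by
  intro t0 t1 h
  induction h with
  | here t =>
    intro t' he
    exact ⟨.node (.leaf a) t', Insertion.here t', REquiv.node (REquiv.leaf a) he⟩
  | left r h ih =>
    intro t' he
    cases he with
    | node hl hr =>
      obtain ⟨l2, hins, heq⟩ := ih hl
      exact ⟨_, Insertion.left _ hins, REquiv.node heq hr⟩
    | swap hl hr =>
      obtain ⟨l2, hins, heq⟩ := ih hl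
      exact ⟨_, Insertion.right _ hins, REquiv.swap heq hr⟩
  | right l h ih =>
    intro t' he
    cases he with
    | node hl hr =>
      obtain ⟨r2, hins, heq⟩ := ih hr
      exact ⟨_, Insertion.right _ hins, REquiv.node hl heq⟩
    | swap hl hr =>
      obtain ⟨r2, hins, heq⟩ := ih hr
      exact ⟨_, Insertion.left _ hins, REquiv.swap hl heq⟩

theorem node_leaves_ne_singleton {l r : RTree V} (hP : (node l r).Proper) (x : V) :
    (node l r).leaves ≠ {x} := fun h => by
  cases leaves_singleton hP h

theorem delete_exists {a : V} :
    ∀ t : RTree V, t.Proper → a ∈ t.leaves → t.leaves ≠ {a} →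
      ∃ t0 t1 : RTree V, Insertion a t0 t1 ∧ REquiv t t1 ∧
        ∀ b c d : V, b ≠ a → c ≠ a → d ≠ a →
          Consistent t b c d → Consistent t0 b c d := by
  intro t
  induction t with
  | leaf x =>
    intro hP hmem hne
    exfalso
    apply hne
    rw [leaves_leaf] at hmem ⊢
    rw [Finset.mem_singleton.1 hmem]
  | node l r ihl ihr =>
    intro hP hmem hne
    rcases mem_leaves_node.1 hmem with hal | har
    · cases l with
      | leaf x =>
        have hx : x = a := by
          rw [leaves_leaf, Finset.mem_singleton] at hal; exact hal.symm
        subst hx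
        refine ⟨r, node (leaf x) r, Insertion.here r, REquiv.refl _, ?_⟩
        intro b c d hb hc hd hcon
        rcases hcon with ⟨m1, _, _, _⟩ | ⟨_, _, _, m4⟩ | ⟨m1, _, _⟩ | ⟨_, _, m3⟩
        · exact absurd (by rwa [leaves_leaf, Finset.mem_singleton] at m1) hb
        · exact m4
        · exact absurd (by rwa [leaves_leaf, Finset.mem_singleton] at m1) hb
        · exact absurd (by rwa [leaves_leaf, Finset.mem_singleton] at m3) hd
      | node la lb =>
        obtain ⟨l0, l1, hins, heq, hpres⟩ :=
          ihl (proper_left hP) hal (node_leaves_ne_singleton (proper_left hP) a)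
        refine ⟨node l0 r, node l1 r, Insertion.left r hins, REquiv.node heq (REquiv.refl r), ?_⟩
        have hll : (node la lb).leaves = insert a l0.leaves := by
          rw [heq.leaves_eq, insertion_leaves hins]
        have hmm : ∀ {x : V}, x ≠ a → x ∈ (node la lb).leaves → x ∈ l0.leaves := by
          intro x hxa m
          rw [hll] at m
          rcases Finset.mem_insert.1 m with h | h
          · exact absurd h hxa
          · exact h
        intro b c d hb hc hd hcon
        rcases hcon with ⟨m1, m2, m3, m4⟩ | ⟨m1, m2, m3, m4⟩ | ⟨m1, m2, m3⟩ | ⟨m1, m2, m3⟩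
        · exact Or.inl ⟨hmm hb m1, hmm hc m2, hmm hd m3, hpres b c d hb hc hd m4⟩
        · exact Or.inr (Or.inl ⟨m1, m2, m3, m4⟩)
        · exact Or.inr (Or.inr (Or.inl ⟨hmm hb m1, hmm hc m2, m3⟩))
        · exact Or.inr (Or.inr (Or.inr ⟨m1, m2, hmm hd m3⟩))
    · cases r with
      | leaf x =>
        have hx : x = a := by
          rw [leaves_leaf, Finset.mem_singleton] at har; exact har.symm
        subst hx
        refine ⟨l, node (leaf x) l, Insertion.here l,
          REquiv.swap (REquiv.refl l) (REquiv.leaf x), ?_⟩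
        intro b c d hb hc hd hcon
        rcases hcon with ⟨_, _, _, m4⟩ | ⟨m1, _, _, _⟩ | ⟨_, _, m3⟩ | ⟨m1, _, _⟩
        · exact m4
        · exact absurd (by rwa [leaves_leaf, Finset.mem_singleton] at m1) hb
        · exact absurd (by rwa [leaves_leaf, Finset.mem_singleton] at m3) hd
        · exact absurd (by rwa [leaves_leaf, Finset.mem_singleton] at m1) hb
      | node ra rb =>
        obtain ⟨r0, r1, hins, heq, hpres⟩ :=
          ihr (proper_right hP) har (node_leaves_ne_singleton (proper_right hP) a)
        refine ⟨node l r0, node l r1, Insertion.right l hins,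
          REquiv.node (REquiv.refl l) heq, ?_⟩
        have hll : (node ra rb).leaves = insert a r0.leaves := by
          rw [heq.leaves_eq, insertion_leaves hins]
        have hmm : ∀ {x : V}, x ≠ a → x ∈ (node ra rb).leaves → x ∈ r0.leaves := by
          intro x hxa m
          rw [hll] at m
          rcases Finset.mem_insert.1 m with h | h
          · exact absurd h hxa
          · exact h
        intro b c d hb hc hd hcon
        rcases hcon with ⟨m1, m2, m3, m4⟩ | ⟨m1, m2, m3, m4⟩ | ⟨m1, m2, m3⟩ | ⟨m1, m2, m3⟩
        · exact Or.inl ⟨m1, m2, m3, m4⟩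
        · exact Or.inr (Or.inl ⟨hmm hb m1, hmm hc m2, hmm hd m3, hpres b c d hb hc hd m4⟩)
        · exact Or.inr (Or.inr (Or.inl ⟨m1, m2, hmm hd m3⟩))
        · exact Or.inr (Or.inr (Or.inr ⟨hmm hb m1, hmm hc m2, m3⟩))

end RTree

end Aux2

section Aux3

namespace RTree

variable {V : Type*} [DecidableEq V]

theorem partition_eq {R : Finset V → V} {l r l2 r2 : RTree V}
    (h1 : (node l r).Proper) (h2 : (node l2 r2).Proper)
    (hL : (node l r).leaves = (node l2 r2).leaves)
    (hval : TripletValid R (node l r).leaves)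
    (hr1 : Realizes (node l r) R (node l r).leaves)
    (hr2 : Realizes (node l2 r2) R (node l r).leaves)
    {u : V} (hu : u ∈ l.leaves) (hu2 : u ∈ l2.leaves) :
    l.leaves = l2.leaves ∧ r.leaves = r2.leaves := by
  have huS : u ∈ (node l r).leaves := mem_leaves_node.2 (Or.inl hu)
  have inc1 : ∀ x ∈ l.leaves, x ∈ l2.leaves := by
    intro x hx
    by_cases hxu : x = u
    · subst hxu; exact hu2
    have hxS : x ∈ (node l r).leaves := mem_leaves_node.2 (Or.inl hx)
    have hx2 : x ∈ (node l2 r2).leaves := hL ▸ hxS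
    rcases mem_leaves_node.1 hx2 with h | h
    · exact h
    exfalso
    obtain ⟨z, hz⟩ := exists_mem_leaves r
    have hzS : z ∈ (node l r).leaves := mem_leaves_node.2 (Or.inr hz)
    have hzx : z ≠ x := fun e => proper_disj h1 hx (e ▸ hz)
    have hzu : z ≠ u := fun e => proper_disj h1 hu (e ▸ hz)
    have happ := same_side_apex h1 hval hr1 hu hx hz huS hxS hzS (fun e => hxu e.symm)
    exact cross_apex h2 hr2 hu2 h huS hxS hzS hzu hzx happ
  have inc2 : ∀ x ∈ l2.leaves, x ∈ l.leaves := by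
    intro x hx2
    by_cases hxu : x = u
    · subst hxu; exact hu
    have hxS : x ∈ (node l r).leaves := by
      rw [hL]; exact mem_leaves_node.2 (Or.inl hx2)
    rcases mem_leaves_node.1 hxS with h | h
    · exact h
    exfalso
    obtain ⟨z, hz⟩ := exists_mem_leaves r2
    have hzS : z ∈ (node l r).leaves := by
      rw [hL]; exact mem_leaves_node.2 (Or.inr hz)
    have hzx : z ≠ x := fun e => proper_disj h2 hx2 (e ▸ hz)
    have hzu : z ≠ u := fun e => proper_disj h2 hu2 (e ▸ hz)
    have happ := same_side_apex h2 hval hr2 hu2 hx2 hz huS hxS hzS (fun e => hxu e.symm)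
    exact cross_apex h1 hr1 hu h huS hxS hzS hzu hzx happ
  have el : l.leaves = l2.leaves :=
    Finset.Subset.antisymm (fun x hx => inc1 x hx) (fun x hx => inc2 x hx)
  refine ⟨el, ?_⟩
  ext x
  constructor
  · intro hx
    have hxS : x ∈ (node l r).leaves := mem_leaves_node.2 (Or.inr hx)
    have hx2 : x ∈ (node l2 r2).leaves := hL ▸ hxS
    rcases mem_leaves_node.1 hx2 with h | h
    · exact absurd hx (proper_disj h1 (el ▸ h))
    · exact h
  · intro hx
    have hxS : x ∈ (node l r).leaves := by
      rw [hL]; exact mem_leaves_node.2 (Or.inr hx)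
    rcases mem_leaves_node.1 hxS with h | h
    · exact absurd hx (proper_disj h2 (el ▸ h))
    · exact h

theorem realize_unique (R : Finset V → V) :
    ∀ T1 T2 : RTree V, T1.Proper → T2.Proper → T1.leaves = T2.leaves →
      TripletValid R T1.leaves → Realizes T1 R T1.leaves → Realizes T2 R T1.leaves →
      REquiv T1 T2 := by
  intro T1
  induction T1 with
  | leaf x =>
    intro T2 _ h2 hL _ _ _
    have : T2 = leaf x := leaves_singleton h2 (by rw [← hL, leaves_leaf])
    rw [this]
    exact REquiv.leaf x
  | node l r ihl ihr =>
    intro T2 h1 h2 hL hval hr1 hr2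
    cases T2 with
    | leaf y =>
      exfalso
      have h := leaves_singleton h1 (by rw [hL, leaves_leaf])
      cases h
    | node l2 r2 =>
      obtain ⟨u, hu⟩ := exists_mem_leaves l
      have huS : u ∈ (node l r).leaves := mem_leaves_node.2 (Or.inl hu)
      have hu2 : u ∈ (node l2 r2).leaves := hL ▸ huS
      have hsubl : l.leaves ⊆ (node l r).leaves := fun x hx => mem_leaves_node.2 (Or.inl hx)
      have hsubr : r.leaves ⊆ (node l r).leaves := fun x hx => mem_leaves_node.2 (Or.inr hx)
      have rl1 : Realizes l R l.leaves := realizes_left h1 hr1 hsubl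
      have rr1 : Realizes r R r.leaves := realizes_right h1 hr1 hsubr
      rcases mem_leaves_node.1 hu2 with hul | hur
      · obtain ⟨e1, e2⟩ := partition_eq h1 h2 hL hval hr1 hr2 hu hul
        have rl2 : Realizes l2 R l2.leaves :=
          realizes_left h2 hr2 (fun x hx => hsubl (by rw [e1]; exact hx))
        have rr2 : Realizes r2 R r2.leaves :=
          realizes_right h2 hr2 (fun x hx => hsubr (by rw [e2]; exact hx))
        exact REquiv.node
          (ihl l2 (proper_left h1) (proper_left h2) e1 (tripletValid_mono hval hsubl)
            rl1 (e1.symm ▸ rl2))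
          (ihr r2 (proper_right h1) (proper_right h2) e2 (tripletValid_mono hval hsubr)
            rr1 (e2.symm ▸ rr2))
      · have h2' : (node r2 l2).Proper := proper_swap h2
        have hr2' : Realizes (node r2 l2) R (node l r).leaves := realizes_swap hr2
        have hL' : (node l r).leaves = (node r2 l2).leaves := hL.trans (leaves_node_swap r2 l2)
        obtain ⟨e1, e2⟩ := partition_eq h1 h2' hL' hval hr1 hr2' hu hur
        have rr2 : Realizes r2 R r2.leaves :=
          realizes_left h2' hr2' (fun x hx => hsubl (by rw [e1]; exact hx))
        have rl2 : Realizes l2 R l2.leaves :=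
          realizes_right h2' hr2' (fun x hx => hsubr (by rw [e2]; exact hx))
        exact REquiv.swap
          (ihl r2 (proper_left h1) (proper_right h2) e1 (tripletValid_mono hval hsubl)
            rl1 (e1.symm ▸ rr2))
          (ihr l2 (proper_right h1) (proper_left h2) e2 (tripletValid_mono hval hsubr)
            rr1 (e2.symm ▸ rl2))

theorem insertion_unique (R : Finset V → V) (a : V) :
    ∀ t t1 t2 : RTree V, t.Proper → a ∉ t.leaves →
      TripletValid R (insert a t.leaves) → Insertion a t t1 → Insertion a t t2 →
      Realizes t1 R (insert a t.leaves) → Realizes t2 R (insert a t.leaves) → t1 = t2 := by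
  intro t
  induction t with
  | leaf x =>
    intro t1 t2 _ _ _ hi1 hi2 _ _
    cases hi1; cases hi2; rfl
  | node l r ihl ihr =>
    intro t1 t2 hP ha hval hi1 hi2 hc1 hc2
    obtain ⟨x, hx⟩ := exists_mem_leaves l
    obtain ⟨y, hy⟩ := exists_mem_leaves r
    have hxN : x ∈ (node l r).leaves := mem_leaves_node.2 (Or.inl hx)
    have hyN : y ∈ (node l r).leaves := mem_leaves_node.2 (Or.inr hy)
    have haS : a ∈ insert a (node l r).leaves := Finset.mem_insert_self _ _
    have hxS : x ∈ insert a (node l r).leaves := Finset.mem_insert_of_mem hxN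
    have hyS : y ∈ insert a (node l r).leaves := Finset.mem_insert_of_mem hyN
    have hax : a ≠ x := fun e => ha (e ▸ hxN)
    have hay : a ≠ y := fun e => ha (e ▸ hyN)
    have hxy : x ≠ y := fun e => proper_disj hP hx (e ▸ hy)
    have hal : a ∉ l.leaves := fun m => ha (mem_leaves_node.2 (Or.inl m))
    have har : a ∉ r.leaves := fun m => ha (mem_leaves_node.2 (Or.inr m))
    have hxr : x ∉ r.leaves := proper_disj hP hx
    have hyl : y ∉ l.leaves := fun m => proper_disj hP m hy
    have hv := hval a x y haS hxS hyS hax hay hxy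
    simp only [Finset.mem_insert, Finset.mem_singleton] at hv
    have hsetx : ({a, y, x} : Finset V) = {a, x, y} := by rw [Finset.pair_comm y x]
    have hseta : ({x, y, a} : Finset V) = {a, x, y} := by ext w; simp; tauto
    have key_here : Realizes (node (leaf a) (node l r)) R (insert a (node l r).leaves) →
        R {a, x, y} = a := by
      intro hreal
      rcases hv with h | h | h
      · exact h
      · exfalso
        have hc := hreal a y x haS hyS hxS hay hax (Ne.symm hxy) (by rw [hsetx]; exact h)
        rcases hc with ⟨_, m2, _, _⟩ | ⟨m1, _, _, _⟩ | ⟨_, m2, _⟩ | ⟨m1, _, _⟩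
        · have hm : y = a := by rwa [leaves_leaf, Finset.mem_singleton] at m2
          exact hay hm.symm
        · exact ha m1
        · have hm : y = a := by rwa [leaves_leaf, Finset.mem_singleton] at m2
          exact hay hm.symm
        · exact ha m1
      · exfalso
        have hc := hreal a x y haS hxS hyS hax hay hxy h
        rcases hc with ⟨_, m2, _, _⟩ | ⟨m1, _, _, _⟩ | ⟨_, m2, _⟩ | ⟨m1, _, _⟩
        · have hm : x = a := by rwa [leaves_leaf, Finset.mem_singleton] at m2
          exact hax hm.symm
        · exact ha m1
        · have hm : x = a := by rwa [leaves_leaf, Finset.mem_singleton] at m2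
          exact hax hm.symm
        · exact ha m1
    have key_left : ∀ {l1 : RTree V}, Insertion a l l1 →
        Realizes (node l1 r) R (insert a (node l r).leaves) → R {a, x, y} = y := by
      intro l1 hins hreal
      have hl1 : l1.leaves = insert a l.leaves := insertion_leaves hins
      have hyl1 : y ∉ l1.leaves := by
        rw [hl1]; simp only [Finset.mem_insert]; rintro (h | h)
        · exact hay h.symm
        · exact hyl h
      rcases hv with h | h | h
      · exfalso
        have hc := hreal x y a hxS hyS haS hxy (Ne.symm hax) (Ne.symm hay)
          (by rw [hseta]; exact h)
        rcases hc with ⟨_, m2, _, _⟩ | ⟨m1, _, _, _⟩ | ⟨_, m2, _⟩ | ⟨m1, _, _⟩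
        · exact hyl1 m2
        · exact hxr m1
        · exact hyl1 m2
        · exact hxr m1
      · exfalso
        have hc := hreal a y x haS hyS hxS hay hax (Ne.symm hxy) (by rw [hsetx]; exact h)
        rcases hc with ⟨_, m2, _, _⟩ | ⟨m1, _, _, _⟩ | ⟨_, m2, _⟩ | ⟨m1, _, _⟩
        · exact hyl1 m2
        · exact har m1
        · exact hyl1 m2
        · exact har m1
      · exact h
    have key_right : ∀ {r1 : RTree V}, Insertion a r r1 →
        Realizes (node l r1) R (insert a (node l r).leaves) → R {a, x, y} = x := by
      intro r1 hins hreal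
      have hr1 : r1.leaves = insert a r.leaves := insertion_leaves hins
      have hxr1 : x ∉ r1.leaves := by
        rw [hr1]; simp only [Finset.mem_insert]; rintro (h | h)
        · exact hax h.symm
        · exact hxr h
      rcases hv with h | h | h
      · exfalso
        have hc := hreal x y a hxS hyS haS hxy (Ne.symm hax) (Ne.symm hay)
          (by rw [hseta]; exact h)
        rcases hc with ⟨_, m2, _, _⟩ | ⟨m1, _, _, _⟩ | ⟨_, m2, _⟩ | ⟨m1, _, _⟩
        · exact hyl m2
        · exact hxr1 m1
        · exact hyl m2
        · exact hxr1 m1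
      · exact h
      · exfalso
        have hc := hreal a x y haS hxS hyS hax hay hxy h
        rcases hc with ⟨m1, _, _, _⟩ | ⟨_, m2, _, _⟩ | ⟨m1, _, _⟩ | ⟨_, m2, _⟩
        · exact hal m1
        · exact hxr1 m2
        · exact hal m1
        · exact hxr1 m2
    have hsubl : insert a l.leaves ⊆ insert a (node l r).leaves :=
      Finset.insert_subset_insert _ (fun w hw => mem_leaves_node.2 (Or.inl hw))
    have hsubr : insert a r.leaves ⊆ insert a (node l r).leaves :=
      Finset.insert_subset_insert _ (fun w hw => mem_leaves_node.2 (Or.inr hw))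
    cases hi1 with
    | here =>
      cases hi2 with
      | here => rfl
      | @left _ l2 _ hins2 =>
        exact absurd ((key_here hc1).symm.trans (key_left hins2 hc2)) hay
      | @right _ _ r2 hins2 =>
        exact absurd ((key_here hc1).symm.trans (key_right hins2 hc2)) hax
    | @left _ l1 _ hins1 =>
      cases hi2 with
      | here =>
        exact absurd ((key_here hc2).symm.trans (key_left hins1 hc1)) hay
      | @left _ l2 _ hins2 =>
        have R1 : Realizes l1 R (insert a l.leaves) := by
          have hP1 : (node l1 r).Proper := insertion_proper (Insertion.left r hins1) hP ha
          have := realizes_left hP1 hc1 (by rw [insertion_leaves hins1]; exact hsubl)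
          rwa [insertion_leaves hins1] at this
        have R2 : Realizes l2 R (insert a l.leaves) := by
          have hP2 : (node l2 r).Proper := insertion_proper (Insertion.left r hins2) hP ha
          have := realizes_left hP2 hc2 (by rw [insertion_leaves hins2]; exact hsubl)
          rwa [insertion_leaves hins2] at this
        rw [ihl l1 l2 (proper_left hP) hal (tripletValid_mono hval hsubl) hins1 hins2 R1 R2]
      | @right _ _ r2 hins2 =>
        exact absurd ((key_left hins1 hc1).symm.trans (key_right hins2 hc2)) (Ne.symm hxy)
    | @right _ _ r1 hins1 =>
      cases hi2 with
      | here =>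
        exact absurd ((key_here hc2).symm.trans (key_right hins1 hc1)) hax
      | @left _ l2 _ hins2 =>
        exact absurd ((key_right hins1 hc1).symm.trans (key_left hins2 hc2)) hxy
      | @right _ _ r2 hins2 =>
        have R1 : Realizes r1 R (insert a r.leaves) := by
          have hP1 : (node l r1).Proper := insertion_proper (Insertion.right l hins1) hP ha
          have := realizes_right hP1 hc1 (by rw [insertion_leaves hins1]; exact hsubr)
          rwa [insertion_leaves hins1] at this
        have R2 : Realizes r2 R (insert a r.leaves) := by
          have hP2 : (node l r2).Proper := insertion_proper (Insertion.right l hins2) hP ha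
          have := realizes_right hP2 hc2 (by rw [insertion_leaves hins2]; exact hsubr)
          rwa [insertion_leaves hins2] at this
        rw [ihr r1 r2 (proper_right hP) har (tripletValid_mono hval hsubr) hins1 hins2 R1 R2]

end RTree

end Aux3

/-- Let `T'` be a rooted binary tree over leaf set `G` realizing a consistent
dense set of rooted triplets, and `a` a new leaf such that the dense triplet
set on `G ∪ {a}` is consistent. Then there is a unique edge of `T'` at which
`a` can be attached (after subdividing that edge) to yield the tree realizing
the triplet set on `G ∪ {a}`. -/
theorem unique_attachment_edge
    (R : Finset V → V) (G : Finset V) (a : V) (ha : a ∉ G)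
    (hval : TripletValid R (insert a G))
    (T' : RTree V) (hP : T'.Proper) (hL : T'.leaves = G)
    (hreal : Realizes T' R G)
    (hcons : TripletConsistentOn R (insert a G)) :
    ∃! T'' : RTree V, Insertion a T' T'' ∧ Realizes T'' R (insert a G) := by
  classical
  obtain ⟨T, hTP, hTL, hTreal⟩ := hcons
  obtain ⟨g, hg⟩ := T'.exists_mem_leaves
  have hgG : g ∈ G := hL ▸ hg
  have hga : g ≠ a := fun e => ha (e ▸ hgG)
  have haT : a ∈ T.leaves := by rw [hTL]; exact Finset.mem_insert_self a G
  have hTne : T.leaves ≠ {a} := by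
    rw [hTL]
    intro h
    have hmem : g ∈ ({a} : Finset V) := h ▸ Finset.mem_insert_of_mem hgG
    exact hga (Finset.mem_singleton.1 hmem)
  obtain ⟨T0, T1, hins01, hequivT1, hpres⟩ := RTree.delete_exists T hTP haT hTne
  have hT1L : T1.leaves = insert a T0.leaves := RTree.insertion_leaves hins01
  have hTT1 : T.leaves = T1.leaves := hequivT1.leaves_eq
  have hnd : (a :: T0.leafList).Nodup :=
    ((RTree.insertion_perm hins01).nodup_iff).1 (hequivT1.perm.nodup hTP)
  have haT0 : a ∉ T0.leaves := fun m => (List.nodup_cons.1 hnd).1 (RTree.mem_leaves.1 m)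
  have hT0P : T0.Proper := (List.nodup_cons.1 hnd).2
  have hT0G : T0.leaves = G := by
    have hins : insert a T0.leaves = insert a G := by rw [← hT1L, ← hTT1, hTL]
    calc T0.leaves = (insert a T0.leaves).erase a := (Finset.erase_insert haT0).symm
      _ = (insert a G).erase a := by rw [hins]
      _ = G := Finset.erase_insert ha
  have hT0real : Realizes T0 R G := by
    intro b c d hb hc hd h1 h2 h3 h4
    have hTb := hTreal b c d (Finset.mem_insert_of_mem hb) (Finset.mem_insert_of_mem hc)
      (Finset.mem_insert_of_mem hd) h1 h2 h3 h4
    exact hpres b c d (fun e => ha (e ▸ hb)) (fun e => ha (e ▸ hc)) (fun e => ha (e ▸ hd)) hTb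
  have hequiv0 : RTree.REquiv T0 T' := by
    apply RTree.realize_unique R T0 T' hT0P hP (hT0G.trans hL.symm)
    · rw [hT0G]; exact RTree.tripletValid_mono hval (Finset.subset_insert a G)
    · rw [hT0G]; exact hT0real
    · rw [hT0G]; exact hreal
  obtain ⟨T2, hins2, hequiv2⟩ := RTree.insertion_equiv hins01 hequiv0
  have hT2real : Realizes T2 R (insert a G) := by
    intro b c d hb hc hd h1 h2 h3 h4
    exact hequiv2.consistent (hequivT1.consistent (hTreal b c d hb hc hd h1 h2 h3 h4))
  refine ⟨T2, ⟨hins2, hT2real⟩, ?_⟩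
  rintro T3 ⟨hins3, hreal3⟩
  exact RTree.insertion_unique R a T' T3 T2 hP (by rw [hL]; exact ha)
    (by rw [hL]; exact hval) hins3 hins2 (by rw [hL]; exact hreal3) (by rw [hL]; exact hT2real)
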